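/- Let (F,σ) be a difference field with constant field K, and let (F(t),σ) be a difference field extension with σ(t) = α·t + β (where either α = 1, or α ∈ F* and β = 0) such that const(F(t),σ) = const(F,σ). If a ∈ F(t) \ F and m ≥ 1, then the product a·σ(a)·σ²(a)···σ^m(a) does not lie in F. -/

import Mathlib

open Polynomial

namespace Stmt3Aux

variable {F : Type*} [Field F] (σ : F ≃+* F) (α β : F)

noncomputable def tau : F[X] →+* F[X] :=
  eval₂RingHom (Polynomial.C.comp (σ : F →+* F)) (C α * X + C β)

noncomputable def tauInv : F[X] →+* F[X] :=
  eval₂RingHom (Polynomial.C.comp ((σ.symm : F ≃+* F) : F →+* F))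
    (C (σ.symm α)⁻¹ * X - C ((σ.symm α)⁻¹ * σ.symm β))

@[simp] lemma tau_C (c : F) : tau σ α β (C c) = C (σ c) := eval₂_C _ _
@[simp] lemma tau_X : tau σ α β X = C α * X + C β := eval₂_X _ _
@[simp] lemma tauInv_C (c : F) : tauInv σ α β (C c) = C (σ.symm c) := eval₂_C _ _
@[simp] lemma tauInv_X :
    tauInv σ α β X = C (σ.symm α)⁻¹ * X - C ((σ.symm α)⁻¹ * σ.symm β) := eval₂_X _ _

lemma tau_eq (p : F[X]) :
    tau σ α β p = (p.map (σ : F →+* F)).comp (C α * X + C β) := by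
  rw [comp, eval₂_map]
  rfl

variable {α}

lemma tauInv_comp_tau (hα : α ≠ 0) :
    (tauInv σ α β).comp (tau σ α β) = RingHom.id F[X] := by
  have hγ : σ.symm α ≠ 0 := fun h => hα (by simpa using congrArg σ h)
  apply ringHom_ext
  · intro a; simp
  · simp only [RingHom.coe_comp, Function.comp_apply, tau_X, map_add, map_mul, tauInv_C,
      tauInv_X, RingHom.id_apply, RingEquiv.symm_apply_apply]
    rw [mul_sub, ← mul_assoc, ← C_mul, mul_inv_cancel₀ hγ]
    ring_nf
    rw [← C_mul, mul_inv_cancel₀ hγ]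
    simp

lemma tau_comp_tauInv (hα : α ≠ 0) :
    (tau σ α β).comp (tauInv σ α β) = RingHom.id F[X] := by
  have hγ : σ.symm α ≠ 0 := fun h => hα (by simpa using congrArg σ h)
  apply ringHom_ext
  · intro a; simp
  · simp only [RingHom.coe_comp, Function.comp_apply, tauInv_X, map_sub, map_mul, tau_C,
      tau_X, RingHom.id_apply, RingEquiv.apply_symm_apply, map_inv₀, map_mul]
    rw [mul_add, ← mul_assoc, ← C_mul, inv_mul_cancel₀ hα]
    simp

lemma tauInv_tau (hα : α ≠ 0) (p : F[X]) : tauInv σ α β (tau σ α β p) = p :=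
  DFunLike.congr_fun (tauInv_comp_tau σ β hα) p

lemma tau_tauInv (hα : α ≠ 0) (p : F[X]) : tau σ α β (tauInv σ α β p) = p :=
  DFunLike.congr_fun (tau_comp_tauInv σ β hα) p

noncomputable def tauE (hα : α ≠ 0) : F[X] ≃+* F[X] :=
  RingEquiv.ofRingHom (tau σ α β) (tauInv σ α β) (tau_comp_tauInv σ β hα) (tauInv_comp_tau σ β hα)

lemma tau_ne_zero (hα : α ≠ 0) {p : F[X]} (hp : p ≠ 0) : tau σ α β p ≠ 0 := fun h =>
  hp (by simpa [tauInv_tau σ β hα] using congrArg (tauInv σ α β) h)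

lemma tauInv_ne_zero (hα : α ≠ 0) {p : F[X]} (hp : p ≠ 0) : tauInv σ α β p ≠ 0 := fun h =>
  hp (by simpa [tau_tauInv σ β hα] using congrArg (tau σ α β) h)

lemma natDegree_tau (hα : α ≠ 0) (p : F[X]) :
    (tau σ α β p).natDegree = p.natDegree := by
  rw [tau_eq, natDegree_comp, natDegree_linear hα, mul_one, natDegree_map]

lemma tau_iter_ne_zero (hα : α ≠ 0) {p : F[X]} (hp : p ≠ 0) (i : ℕ) :
    (tau σ α β)^[i] p ≠ 0 := by
  induction i with
  | zero => simpa
  | succ n ih => rw [Function.iterate_succ_apply']; exact tau_ne_zero σ β hα ih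

lemma tauInv_iter_ne_zero (hα : α ≠ 0) {p : F[X]} (hp : p ≠ 0) (i : ℕ) :
    (tauInv σ α β)^[i] p ≠ 0 := by
  induction i with
  | zero => simpa
  | succ n ih => rw [Function.iterate_succ_apply']; exact tauInv_ne_zero σ β hα ih

lemma natDegree_tau_iter (hα : α ≠ 0) (p : F[X]) (i : ℕ) :
    ((tau σ α β)^[i] p).natDegree = p.natDegree := by
  induction i with
  | zero => simp
  | succ n ih => rw [Function.iterate_succ_apply', natDegree_tau σ β hα, ih]

lemma tau_iter_tauInv_iter (hα : α ≠ 0) (i : ℕ) (p : F[X]) :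
    (tau σ α β)^[i] ((tauInv σ α β)^[i] p) = p := by
  induction i with
  | zero => simp
  | succ n ih =>
      rw [Function.iterate_succ_apply' (tauInv σ α β), Function.iterate_succ_apply
        (tau σ α β)]
      rw [tau_tauInv σ β hα, ih]

lemma iter_dvd {f : F[X] →+* F[X]} {x y : F[X]} (h : x ∣ y) (i : ℕ) :
    (⇑f)^[i] x ∣ (⇑f)^[i] y := by
  induction i with
  | zero => simpa
  | succ n ih => rw [Function.iterate_succ_apply', Function.iterate_succ_apply']
                 exact map_dvd f ih

lemma irr_tau_iter (hα : α ≠ 0) {p : F[X]} (hp : Irreducible p) (i : ℕ) :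
    Irreducible ((tau σ α β)^[i] p) := by
  induction i with
  | zero => simpa
  | succ n ih =>
      rw [Function.iterate_succ_apply']
      exact ih.map (tauE σ β hα)

lemma irr_tauInv_iter (hα : α ≠ 0) {p : F[X]} (hp : Irreducible p) (i : ℕ) :
    Irreducible ((tauInv σ α β)^[i] p) := by
  induction i with
  | zero => simpa
  | succ n ih =>
      rw [Function.iterate_succ_apply']
      exact ih.map (tauE σ β hα).symm

end Stmt3Aux
namespace Stmt3Aux

variable {F : Type*} [Field F] {σ : F ≃+* F} {α β : F} {σ' : RatFunc F ≃+* RatFunc F}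

lemma algebraMap_tau
    (hC : ∀ c : F, σ' (algebraMap F (RatFunc F) c) = algebraMap F (RatFunc F) (σ c))
    (hX : σ' RatFunc.X = algebraMap F (RatFunc F) α * RatFunc.X + algebraMap F (RatFunc F) β)
    (p : F[X]) :
    algebraMap F[X] (RatFunc F) (tau σ α β p) = σ' (algebraMap F[X] (RatFunc F) p) := by
  have h : (algebraMap F[X] (RatFunc F)).comp (tau σ α β)
      = (σ' : RatFunc F →+* RatFunc F).comp (algebraMap F[X] (RatFunc F)) := by
    apply ringHom_ext
    · intro a
      simp only [RingHom.coe_comp, Function.comp_apply, tau_C, RatFunc.algebraMap_C,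
        RingEquiv.coe_toRingHom]
      exact (hC a).symm
    · simp only [RingHom.coe_comp, Function.comp_apply, tau_X, map_add, map_mul,
        RatFunc.algebraMap_C, RatFunc.algebraMap_X, RingEquiv.coe_toRingHom]
      exact hX.symm
  exact DFunLike.congr_fun h p

variable (hα : α ≠ 0)
    (hC : ∀ c : F, σ' (algebraMap F (RatFunc F) c) = algebraMap F (RatFunc F) (σ c))
    (hX : σ' RatFunc.X = algebraMap F (RatFunc F) α * RatFunc.X + algebraMap F (RatFunc F) β)
    (hconst : ∀ f : RatFunc F, σ' f = f → ∃ c : F, σ c = c ∧ f = algebraMap F (RatFunc F) c)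

include hC hX hconst

lemma natDegree_eq_zero_of_fixed {s : F[X]} (hs : tau σ α β s = s) : s.natDegree = 0 := by
  have h1 : σ' (algebraMap F[X] (RatFunc F) s) = algebraMap F[X] (RatFunc F) s := by
    rw [← algebraMap_tau hC hX, hs]
  obtain ⟨c, -, hc⟩ := hconst _ h1
  have hs' : s = C c := by
    apply RatFunc.algebraMap_injective F
    rw [hc, RatFunc.algebraMap_C, RatFunc.algebraMap_eq_C]
  rw [hs', natDegree_C]

lemma natDegree_eq_zero_of_semiinvariant {h : F[X]} {e u : F} (he : e ≠ 0)
    (hh : tau σ α β h = C u * h) (heu : σ e = u * e) : h.natDegree = 0 := by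
  have hu : u ≠ 0 := by
    intro h0
    rw [h0, zero_mul] at heu
    exact he (by simpa using congrArg σ.symm heu)
  have hfix : tau σ α β (C e⁻¹ * h) = C e⁻¹ * h := by
    rw [map_mul, tau_C, hh, map_inv₀, heu, ← mul_assoc, ← C_mul]
    congr 2
    field_simp
  have h0 := natDegree_eq_zero_of_fixed hC hX hconst hfix
  rwa [natDegree_C_mul (inv_ne_zero he)] at h0

include hα

lemma not_periodic {π : F[X]} (hmon : π.Monic) (hirr : Irreducible π)
    (hcase : α = 1 ∨ (β = 0 ∧ π ≠ X)) {k : ℕ} (hk : 1 ≤ k) :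
    ¬ Associated ((tau σ α β)^[k] π) π := by
  intro hass
  obtain ⟨w, hw⟩ := hass
  obtain ⟨u, hu_isunit, hu⟩ := Polynomial.isUnit_iff.mp w.isUnit
  have hπ0 : π ≠ 0 := hirr.ne_zero
  have hu0 : (u : F) ≠ 0 := hu_isunit.ne_zero
  set v : F := u⁻¹ with hv
  have hv0 : v ≠ 0 := inv_ne_zero hu0
  have hπeq : C u * (tau σ α β)^[k] π = π := by rw [hu, mul_comm]; exact hw
  have hkey : (tau σ α β)^[k] π = C v * π := by
    conv_rhs => rw [← hπeq]
    rw [hv, ← mul_assoc, ← C_mul, inv_mul_cancel₀ hu0, C_1, one_mul]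
  set r := ∏ i ∈ Finset.range k, (tau σ α β)^[i] π with hr
  have hrne : r ≠ 0 := Finset.prod_ne_zero_iff.mpr fun i _ => tau_iter_ne_zero σ β hα hπ0 i
  have h2 : tau σ α β r * π = C v * r * π := by
    have e1 : tau σ α β r * π = ∏ i ∈ Finset.range (k + 1), (tau σ α β)^[i] π := by
      rw [hr, map_prod, Finset.prod_range_succ']
      simp [← Function.iterate_succ_apply']
    have e2 : (∏ i ∈ Finset.range (k + 1), (tau σ α β)^[i] π) = r * (C v * π) := by
      rw [Finset.prod_range_succ, ← hr, hkey]
    rw [e1, e2]; ring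
  have htr : tau σ α β r = C v * r := mul_right_cancel₀ hπ0 h2
  have hdr : r.natDegree = k * π.natDegree := by
    rw [hr, natDegree_prod _ _ fun i _ => tau_iter_ne_zero σ β hα hπ0 i]
    simp [natDegree_tau_iter σ β hα]
  have hπdeg : π.natDegree ≠ 0 := hirr.natDegree_pos.ne'
  have hcontr : r.natDegree ≠ 0 := by
    rw [hdr]
    exact Nat.mul_ne_zero (by omega) hπdeg
  rcases hcase with h1 | ⟨hβ, hπX⟩
  · -- Σ-case: leading coefficients
    have hlc : ∀ h : F[X], (tau σ α β h).leadingCoeff = σ h.leadingCoeff := by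
      intro h
      by_cases h0 : h = 0
      · simp [h0]
      · rw [tau_eq, h1, C_1, one_mul,
          leadingCoeff_comp (by rw [natDegree_X_add_C]; exact one_ne_zero),
          leadingCoeff_X_add_C, one_pow, mul_one, leadingCoeff_map]
        rfl
    have heu : σ r.leadingCoeff = v * r.leadingCoeff := by
      have h3 := congrArg leadingCoeff htr
      rwa [hlc, leadingCoeff_mul, leadingCoeff_C] at h3
    exact hcontr (natDegree_eq_zero_of_semiinvariant hC hX hconst
      (leadingCoeff_ne_zero.mpr hrne) htr heu)
  · -- Π-case: constant coefficients
    have hev : ∀ h : F[X], (tau σ α β h).eval 0 = σ (h.eval 0) := by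
      intro h
      rw [tau_eq, eval_comp]
      have h4 : (C α * X + C β).eval 0 = 0 := by simp [hβ]
      rw [h4, ← coeff_zero_eq_eval_zero, coeff_map, coeff_zero_eq_eval_zero]
      rfl
    have hπ0' : π.eval 0 ≠ 0 := by
      intro h0
      have hdvd : X ∣ π := X_dvd_iff.mpr (by rwa [coeff_zero_eq_eval_zero])
      have hXassoc : Associated X π := irreducible_X.associated_of_dvd hirr hdvd
      exact hπX (eq_of_monic_of_associated hmon monic_X hXassoc.symm)
    have hiter : ∀ i : ℕ, ((tau σ α β)^[i] π).eval 0 ≠ 0 := by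
      intro i
      induction i with
      | zero => simpa
      | succ n ih =>
          rw [Function.iterate_succ_apply', hev]
          intro h0
          exact ih (by simpa using congrArg σ.symm h0)
    have hr0 : r.eval 0 ≠ 0 := by
      rw [hr, eval_prod]
      exact Finset.prod_ne_zero_iff.mpr fun i _ => hiter i
    have heu : σ (r.eval 0) = v * r.eval 0 := by
      have h3 := congrArg (eval 0) htr
      rwa [hev, eval_mul, eval_C] at h3
    exact hcontr (natDegree_eq_zero_of_semiinvariant hC hX hconst hr0 htr heu)

end Stmt3Aux
namespace Stmt3Aux

variable {F : Type*} [Field F] {σ : F ≃+* F} {α β : F}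

lemma assoc_iter {f : F[X] →+* F[X]} {x y : F[X]} (h : Associated x y) (i : ℕ) :
    Associated ((⇑f)^[i] x) ((⇑f)^[i] y) := by
  induction i with
  | zero => simpa
  | succ n ih =>
      rw [Function.iterate_succ_apply', Function.iterate_succ_apply']
      exact ih.map f

lemma tauInv_iter_tau_iter (hα : α ≠ 0) (i : ℕ) (p : F[X]) :
    (tauInv σ α β)^[i] ((tau σ α β)^[i] p) = p := by
  induction i with
  | zero => simp
  | succ n ih =>
      rw [Function.iterate_succ_apply' (tau σ α β), Function.iterate_succ_apply (tauInv σ α β),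
        tauInv_tau σ β hα, ih]

lemma escape (hα : α ≠ 0) {p q : F[X]} (hp : p ≠ 0) (hq : q ≠ 0) (hcop : IsCoprime p q)
    {c : F} (hc : c ≠ 0) {m : ℕ}
    (hPQ : ∏ i ∈ Finset.range (m + 1), (tau σ α β)^[i] p
      = C c * ∏ i ∈ Finset.range (m + 1), (tau σ α β)^[i] q)
    {π : F[X]} (hirr : Irreducible π)
    (hnp : ∀ k : ℕ, 1 ≤ k → ¬ Associated ((tau σ α β)^[k] π) π) :
    ¬ π ∣ p * q := by
  classical
  intro hdvd
  have hpq0 : p * q ≠ 0 := mul_ne_zero hp hq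
  have hπ0 : π ≠ 0 := hirr.ne_zero
  have hnonassoc : ∀ i j : ℕ, i < j →
      ¬ Associated ((tauInv σ α β)^[i] π) ((tauInv σ α β)^[j] π) := by
    intro i j hij hassoc
    have h1 := assoc_iter (f := tau σ α β) hassoc i
    rw [tau_iter_tauInv_iter σ β hα] at h1
    have e2 : (tau σ α β)^[i] ((tauInv σ α β)^[j] π) = (tauInv σ α β)^[j - i] π := by
      have hj : j = i + (j - i) := by omega
      conv_lhs => rw [hj, Function.iterate_add_apply]
      rw [tau_iter_tauInv_iter σ β hα]
    rw [e2] at h1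
    have h2 := assoc_iter (f := tau σ α β) h1 (j - i)
    rw [tau_iter_tauInv_iter σ β hα] at h2
    exact hnp (j - i) (by omega) h2
  set T : Set ℕ := {n : ℕ | (tauInv σ α β)^[n] π ∣ p * q} with hT
  have h0T : 0 ∈ T := by simpa [hT] using hdvd
  have hTfin : T.Finite := by
    have hfin : {g : F[X] | g.Monic ∧ g ∣ p * q}.Finite := by
      have hfini : Finite {g : F[X] // g.Monic ∧ g ∣ p * q} :=
        @Finite.of_fintype _ (Polynomial.fintypeSubtypeMonicDvd (p * q) hpq0)
      exact hfini
    apply Set.Finite.subset (hfin.biUnion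
      (t := fun g => {n : ℕ | Associated ((tauInv σ α β)^[n] π) g}) ?_) ?_
    · intro g _
      apply Set.Subsingleton.finite
      intro n₁ h₁ n₂ h₂
      by_contra hne
      rcases Nat.lt_or_ge n₁ n₂ with h | h
      · exact hnonassoc n₁ n₂ h (h₁.trans h₂.symm)
      · exact hnonassoc n₂ n₁ (by omega) (h₂.trans h₁.symm)
    · intro n hn
      refine Set.mem_biUnion (x := normalize ((tauInv σ α β)^[n] π)) ?_ ?_
      · exact ⟨Polynomial.monic_normalize (tauInv_iter_ne_zero σ β hα hπ0 n),
          (normalize_associated _).dvd.trans hn⟩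
      · exact associated_normalize _
  have hTne : hTfin.toFinset.Nonempty := ⟨0, by simpa using h0T⟩
  set J := hTfin.toFinset.max' hTne with hJ
  have hJT : J ∈ T := by
    have := hTfin.toFinset.max'_mem hTne
    simpa using this
  have hJmax : ∀ n ∈ T, n ≤ J := fun n hn =>
    Finset.le_max' _ n (by simpa using hn)
  set ρ := (tauInv σ α β)^[J] π with hρ
  have hρdvd : ρ ∣ p * q := hJT
  have hρirr : Irreducible ρ := irr_tauInv_iter σ β hα hirr J
  have hρprime : Prime ρ := UniqueFactorizationMonoid.irreducible_iff_prime.mp hρirr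
  have hnotiter : ∀ i : ℕ, 1 ≤ i → ¬ ((tauInv σ α β)^[i] ρ ∣ p * q) := by
    intro i hi hdvd'
    have hmem : i + J ∈ T := by
      have h8 : (tauInv σ α β)^[i + J] π ∣ p * q := by
        rwa [Function.iterate_add_apply]
      simpa [hT] using h8
    have := hJmax _ hmem
    omega
  have key : ∀ x y : F[X], IsCoprime x y → y ∣ p * q → ρ ∣ x →
      ρ ∣ ∏ i ∈ Finset.range (m + 1), (tau σ α β)^[i] y → False := by
    intro x y hxy hypq hρx hρprod
    obtain ⟨i, hi_mem, hie⟩ := hρprime.exists_mem_finset_dvd hρprod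
    have h7 : (tauInv σ α β)^[i] ρ ∣ y := by
      have h9 := iter_dvd (f := tauInv σ α β) hie i
      rwa [tauInv_iter_tau_iter hα] at h9
    rcases Nat.eq_zero_or_pos i with rfl | hipos
    · simp only [Function.iterate_zero_apply] at h7
      exact hρprime.not_unit (hxy.isUnit_of_dvd' hρx h7)
    · exact hnotiter i hipos (h7.trans hypq)
  have hPdvd : p ∣ ∏ i ∈ Finset.range (m + 1), (tau σ α β)^[i] p := by
    have h0m : (0 : ℕ) ∈ Finset.range (m + 1) := by simp
    simpa using Finset.dvd_prod_of_mem (fun i => (tau σ α β)^[i] p) h0m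
  have hQdvd : q ∣ ∏ i ∈ Finset.range (m + 1), (tau σ α β)^[i] q := by
    have h0m : (0 : ℕ) ∈ Finset.range (m + 1) := by simp
    simpa using Finset.dvd_prod_of_mem (fun i => (tau σ α β)^[i] q) h0m
  rcases hρprime.2.2 p q hρdvd with hρp | hρq
  · have h5 : ρ ∣ C c * ∏ i ∈ Finset.range (m + 1), (tau σ α β)^[i] q := by
      rw [← hPQ]; exact hρp.trans hPdvd
    have h6 : ρ ∣ ∏ i ∈ Finset.range (m + 1), (tau σ α β)^[i] q := by
      rcases hρprime.2.2 _ _ h5 with hCc | h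
      · exact absurd (isUnit_of_dvd_unit hCc (Polynomial.isUnit_C.mpr
          (isUnit_iff_ne_zero.mpr hc))) hρprime.not_unit
      · exact h
    exact key p q hcop (dvd_mul_left q p) hρp h6
  · have hPQ' : ∏ i ∈ Finset.range (m + 1), (tau σ α β)^[i] q
        = C c⁻¹ * ∏ i ∈ Finset.range (m + 1), (tau σ α β)^[i] p := by
      rw [hPQ, ← mul_assoc, ← C_mul, inv_mul_cancel₀ hc, C_1, one_mul]
    have h5 : ρ ∣ C c⁻¹ * ∏ i ∈ Finset.range (m + 1), (tau σ α β)^[i] p := by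
      rw [← hPQ']; exact hρq.trans hQdvd
    have h6 : ρ ∣ ∏ i ∈ Finset.range (m + 1), (tau σ α β)^[i] p := by
      rcases hρprime.2.2 _ _ h5 with hCc | h
      · exact absurd (isUnit_of_dvd_unit hCc (Polynomial.isUnit_C.mpr
          (isUnit_iff_ne_zero.mpr (inv_ne_zero hc)))) hρprime.not_unit
      · exact h
    exact key q p hcop.symm (dvd_mul_right p q) hρq h6

end Stmt3Aux
open Stmt3Aux Polynomial in
/-- In a ΠΣ-field extension `F(t)` of a difference field `F` (with unchanged constants),
for `a ∈ F(t) \ F` and `m ≥ 1`, the product `a·σ(a)···σ^m(a)` does not lie in `F`. -/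
theorem stmt_3 (F : Type*) [Field F] [CharZero F] (σ : F ≃+* F)
    (σ' : RatFunc F ≃+* RatFunc F) (α β : F)
    (hαβ : α = 1 ∨ (α ≠ 0 ∧ β = 0))
    (hC : ∀ c : F, σ' (algebraMap F (RatFunc F) c) = algebraMap F (RatFunc F) (σ c))
    (hX : σ' RatFunc.X = algebraMap F (RatFunc F) α * RatFunc.X + algebraMap F (RatFunc F) β)
    (hconst : ∀ f : RatFunc F, σ' f = f → ∃ c : F, σ c = c ∧ f = algebraMap F (RatFunc F) c)
    (a : RatFunc F) (ha : ¬ ∃ c : F, a = algebraMap F (RatFunc F) c)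
    (m : ℕ) (hm : 1 ≤ m) :
    ¬ ∃ c : F, (∏ i ∈ Finset.range (m + 1), (⇑σ')^[i] a) = algebraMap F (RatFunc F) c := by
  rintro ⟨c, hcprod⟩
  have hα : α ≠ 0 := by
    rcases hαβ with h | h
    · rw [h]; exact one_ne_zero
    · exact h.1
  set p := a.num with hp
  set q := a.denom with hqd
  have hq0 : q ≠ 0 := a.denom_ne_zero
  have ha0 : a ≠ 0 := by
    rintro rfl
    exact ha ⟨0, by simp⟩
  have hp0 : p ≠ 0 := RatFunc.num_ne_zero ha0
  have hcop : IsCoprime p q := a.isCoprime_num_denom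
  have hiter : ∀ i : ℕ, (⇑σ')^[i] a
      = algebraMap F[X] (RatFunc F) ((tau σ α β)^[i] p)
        / algebraMap F[X] (RatFunc F) ((tau σ α β)^[i] q) := by
    intro i
    induction i with
    | zero =>
        simp only [Function.iterate_zero_apply]
        exact (RatFunc.num_div_denom a).symm
    | succ n ih =>
        rw [Function.iterate_succ_apply', ih, map_div₀,
          Function.iterate_succ_apply' (tau σ α β) n p,
          Function.iterate_succ_apply' (tau σ α β) n q,
          algebraMap_tau hC hX, algebraMap_tau hC hX]
  have hQne : algebraMap F[X] (RatFunc F)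
      (∏ i ∈ Finset.range (m + 1), (tau σ α β)^[i] q) ≠ 0 :=
    RatFunc.algebraMap_ne_zero
      (Finset.prod_ne_zero_iff.mpr fun i _ => tau_iter_ne_zero σ β hα hq0 i)
  have hprodeq : algebraMap F[X] (RatFunc F) (∏ i ∈ Finset.range (m + 1), (tau σ α β)^[i] p)
      = algebraMap F (RatFunc F) c
        * algebraMap F[X] (RatFunc F) (∏ i ∈ Finset.range (m + 1), (tau σ α β)^[i] q) := by
    have h1 : (∏ i ∈ Finset.range (m + 1), (⇑σ')^[i] a)
        = algebraMap F[X] (RatFunc F) (∏ i ∈ Finset.range (m + 1), (tau σ α β)^[i] p)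
          / algebraMap F[X] (RatFunc F) (∏ i ∈ Finset.range (m + 1), (tau σ α β)^[i] q) := by
      rw [map_prod, map_prod, ← Finset.prod_div_distrib]
      exact Finset.prod_congr rfl fun i _ => hiter i
    rw [h1, div_eq_iff hQne] at hcprod
    exact hcprod
  have hPQ : ∏ i ∈ Finset.range (m + 1), (tau σ α β)^[i] p
      = C c * ∏ i ∈ Finset.range (m + 1), (tau σ α β)^[i] q := by
    apply RatFunc.algebraMap_injective F
    rw [hprodeq, map_mul, RatFunc.algebraMap_C, RatFunc.algebraMap_eq_C]
  have hc0 : c ≠ 0 := by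
    rintro rfl
    rw [map_zero, zero_mul] at hprodeq
    exact RatFunc.algebraMap_ne_zero
      (Finset.prod_ne_zero_iff.mpr fun i _ => tau_iter_ne_zero σ β hα hp0 i) hprodeq
  -- the numerator and denominator have the same degree
  have hdeg : p.natDegree = q.natDegree := by
    have h2 := congrArg natDegree hPQ
    rw [natDegree_C_mul hc0,
      natDegree_prod _ _ (fun i _ => tau_iter_ne_zero σ β hα hp0 i),
      natDegree_prod _ _ (fun i _ => tau_iter_ne_zero σ β hα hq0 i)] at h2
    simp only [natDegree_tau_iter σ β hα, Finset.sum_const, Finset.card_range,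
      smul_eq_mul] at h2
    exact Nat.eq_of_mul_eq_mul_left (Nat.succ_pos m) h2
  by_cases hdeg0 : p.natDegree = 0
  · -- then a lies in F, contradiction
    have hqz : q.natDegree = 0 := hdeg ▸ hdeg0
    have hpc : p = C (p.coeff 0) := eq_C_of_natDegree_eq_zero hdeg0
    have hqc : q = C (q.coeff 0) := eq_C_of_natDegree_eq_zero hqz
    apply ha
    refine ⟨p.coeff 0 / q.coeff 0, ?_⟩
    rw [← a.num_div_denom, ← hp, ← hqd]
    conv_lhs => rw [hpc, hqc]
    rw [RatFunc.algebraMap_C, RatFunc.algebraMap_C, ← RatFunc.algebraMap_eq_C, map_div₀]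
  · have hdp : 0 < p.natDegree := Nat.pos_of_ne_zero hdeg0
    have hdq : 0 < q.natDegree := hdeg ▸ hdp
    obtain ⟨gp, hgpm, hgpi, hgpd⟩ :=
      p.exists_monic_irreducible_factor (not_isUnit_of_natDegree_pos p hdp)
    obtain ⟨gq, hgqm, hgqi, hgqd⟩ :=
      q.exists_monic_irreducible_factor (not_isUnit_of_natDegree_pos q hdq)
    rcases hαβ with h1 | ⟨hα', hβ⟩
    · exact escape hα hp0 hq0 hcop hc0 hPQ hgpi
        (fun k hk => not_periodic hα hC hX hconst hgpm hgpi (Or.inl h1) hk)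
        (hgpd.trans (dvd_mul_right p q))
    · have hgpX : gp = X := by
        by_contra hne
        exact escape hα hp0 hq0 hcop hc0 hPQ hgpi
          (fun k hk => not_periodic hα hC hX hconst hgpm hgpi (Or.inr ⟨hβ, hne⟩) hk)
          (hgpd.trans (dvd_mul_right p q))
      have hgqX : gq = X := by
        by_contra hne
        exact escape hα hp0 hq0 hcop hc0 hPQ hgqi
          (fun k hk => not_periodic hα hC hX hconst hgqm hgqi (Or.inr ⟨hβ, hne⟩) hk)
          (hgqd.trans (dvd_mul_left q p))
      exact Polynomial.not_isUnit_X
        (hcop.isUnit_of_dvd' (hgpX ▸ hgpd) (hgqX ▸ hgqd))
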